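/- For all real α, β ≠ 0, γ, x, all λ ∈ ℕ with λ ≥ 1, and all n ≥ 0: A^{λ,x}_n(α,β,γ) = (-1)^n · Σ_{k=0}^{n} C(k+λ-1,k) · (-β)^k · k! · S(n,k;α,β,βλ-γ) · (x+1)^k. -/

import Mathlib

open Finset

/-- Generalized factorial polynomial `(t|α)_n = ∏_{j=0}^{n-1} (t - jα)`. -/
noncomputable def gfact (t α : ℝ) (n : ℕ) : ℝ := ∏ j ∈ Finset.range n, (t - j * α)

/-- Hsu–Shiue generalized Stirling numbers (explicit formula, β ≠ 0). -/
noncomputable def HS (n k : ℕ) (α β γ : ℝ) : ℝ :=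
  (1 / (β ^ k * (Nat.factorial k : ℝ))) *
    ∑ s ∈ Finset.range (k + 1), (-1 : ℝ) ^ (k - s) * (Nat.choose k s : ℝ) * gfact (β * s + γ) α n

/-- Second-type higher order generalized geometric polynomials. -/
noncomputable def A (lam : ℕ) (x : ℝ) (n : ℕ) (α β γ : ℝ) : ℝ :=
  ∑ k ∈ Finset.range (n + 1),
    (Nat.choose (k + lam - 1) k : ℝ) * (-1 : ℝ) ^ (n + k) * β ^ k * (Nat.factorial k : ℝ) *
      HS n k α (-β) (-γ) * x ^ k


open Polynomial

lemma descPoch_eval_prod (m : ℕ) (y : ℝ) :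
    (descPochhammer ℝ m).eval y = ∏ j ∈ range m, (y - j) := by
  induction m with
  | zero => simp
  | succ m ih => rw [descPochhammer_succ_right, prod_range_succ, ← ih]; simp

lemma diff_step (f : ℕ → ℝ) (k : ℕ) :
    ∑ s ∈ range (k+2), (-1:ℝ)^s * ((k+1).choose s) * f s
      = ∑ s ∈ range (k+1), (-1:ℝ)^s * (k.choose s) * (f s - f (s+1)) := by
  have hT : ∑ s ∈ range (k+1), (-1:ℝ)^(s+1) * (k.choose (s+1)) * f (s+1)
      = ∑ s ∈ range (k+1), (-1:ℝ)^s * (k.choose s) * f s - f 0 := by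
    have h := Finset.sum_range_succ' (fun s => (-1:ℝ)^s * (k.choose s) * f s) (k+1)
    rw [Finset.sum_range_succ] at h
    simp only [Nat.choose_succ_self, Nat.cast_zero, mul_zero, zero_mul, add_zero,
      pow_zero, Nat.choose_zero_right, Nat.cast_one, mul_one, one_mul] at h
    linarith [h]
  rw [Finset.sum_range_succ' (fun s => (-1:ℝ)^s * ((k+1).choose s) * f s) (k+1)]
  have h1 : ∀ s, (-1:ℝ)^(s+1) * (((k+1).choose (s+1) : ℕ) : ℝ) * f (s+1)
      = -((-1:ℝ)^s * (k.choose s) * f (s+1)) + (-1:ℝ)^(s+1) * (k.choose (s+1)) * f (s+1) := by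
    intro s
    rw [Nat.choose_succ_succ]
    push_cast
    ring
  simp only [h1]
  rw [Finset.sum_add_distrib, hT]
  simp only [pow_zero, Nat.choose_zero_right, Nat.cast_one, mul_one, one_mul]
  have : ∀ s : ℕ, -((-1:ℝ) ^ s * ↑(k.choose s) * f (s + 1)) + (-1:ℝ) ^ s * ↑(k.choose s) * f s
      = (-1:ℝ) ^ s * ↑(k.choose s) * (f s - f (s + 1)) := fun s => by ring
  rw [show (∑ x ∈ range (k + 1), -((-1:ℝ) ^ x * ↑(k.choose x) * f (x + 1)) +
        (∑ s ∈ range (k + 1), (-1:ℝ) ^ s * ↑(k.choose s) * f s - f 0) + f 0)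
      = ∑ x ∈ range (k + 1), (-((-1:ℝ) ^ x * ↑(k.choose x) * f (x + 1)) +
        (-1:ℝ) ^ x * ↑(k.choose x) * f x) by rw [Finset.sum_add_distrib]; ring]
  exact Finset.sum_congr rfl fun s _ => this s

lemma alt_zero (k : ℕ) :
    ∑ s ∈ range (k+2), (-1:ℝ)^s * ((k+1).choose s) * 1 = 0 := by
  rw [diff_step (fun _ => (1:ℝ)) k]
  simp

lemma lemI (k : ℕ) : ∀ m : ℕ,
    ∑ s ∈ range (k+1), (-1:ℝ)^s * (k.choose s) * (s.choose m) =
      if k = m then (-1:ℝ)^m else 0 := by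
  induction k with
  | zero =>
    intro m
    cases m with
    | zero => simp
    | succ m => simp [Nat.choose_eq_zero_of_lt (Nat.succ_pos m)]
  | succ k ih =>
    intro m
    cases m with
    | zero =>
      have := alt_zero k
      simp only [mul_one] at this
      simp only [Nat.choose_zero_right, Nat.cast_one, mul_one]
      rw [if_neg (Nat.succ_ne_zero k)]
      exact this
    | succ m =>
      rw [show k + 1 + 1 = k + 2 from rfl, diff_step (fun s => ((s.choose (m+1) : ℕ) : ℝ)) k]
      have h1 : ∀ s : ℕ, ((s.choose (m+1) : ℕ) : ℝ) - ((s+1).choose (m+1) : ℕ) = -(s.choose m) := by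
        intro s
        rw [Nat.choose_succ_succ]
        push_cast; ring
      simp only [h1]
      have : ∑ s ∈ range (k+1), (-1:ℝ)^s * (k.choose s) * -(s.choose m)
          = -∑ s ∈ range (k+1), (-1:ℝ)^s * (k.choose s) * (s.choose m) := by
        rw [← Finset.sum_neg_distrib]; exact Finset.sum_congr rfl fun s _ => by ring
      rw [this, ih m]
      by_cases h : k = m
      · subst h; simp [pow_succ]
      · rw [if_neg h, if_neg (fun hc => h (Nat.succ_injective hc)), neg_zero]

lemma lemII (a k : ℕ) : ∀ m : ℕ,
    ∑ s ∈ range (k+1), (-1:ℝ)^s * (k.choose s) * ((a+s).choose m) =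
      if k ≤ m then (-1:ℝ)^k * (a.choose (m-k)) else 0 := by
  induction k with
  | zero => intro m; simp
  | succ k ih =>
    intro m
    cases m with
    | zero =>
      have := alt_zero k
      simp only [mul_one] at this
      simp only [Nat.choose_zero_right, Nat.cast_one, mul_one]
      rw [if_neg (by omega)]
      exact this
    | succ m =>
      rw [show k + 1 + 1 = k + 2 from rfl, diff_step (fun s => (((a+s).choose (m+1) : ℕ) : ℝ)) k]
      have h1 : ∀ s : ℕ, (((a+s).choose (m+1) : ℕ) : ℝ) - ((a+(s+1)).choose (m+1) : ℕ)
          = -((a+s).choose m) := by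
        intro s
        rw [show a + (s+1) = (a+s) + 1 from rfl, Nat.choose_succ_succ]
        push_cast; ring
      simp only [h1]
      have : ∑ s ∈ range (k+1), (-1:ℝ)^s * (k.choose s) * -((a+s).choose m)
          = -∑ s ∈ range (k+1), (-1:ℝ)^s * (k.choose s) * ((a+s).choose m) := by
        rw [← Finset.sum_neg_distrib]; exact Finset.sum_congr rfl fun s _ => by ring
      rw [this, ih m]
      by_cases h : k ≤ m
      · rw [if_pos h, if_pos (by omega), Nat.succ_sub_succ, pow_succ]; ring
      · rw [if_neg h, if_neg (by omega), neg_zero]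

lemma prod_choose (L m k : ℕ) (h : k ≤ m) :
    (k+L).choose k * (L+m).choose (m-k) = (L+m).choose m * m.choose k := by
  apply Nat.eq_of_mul_eq_mul_right
    (show 0 < Nat.factorial k * Nat.factorial L * Nat.factorial (m-k) by positivity)
  have h1 : (k+L).choose k * Nat.factorial k * Nat.factorial L = Nat.factorial (k+L) := by
    simpa using Nat.choose_mul_factorial_mul_factorial (show k ≤ k + L by omega)
  have h2 : (L+m).choose (m-k) * Nat.factorial (m-k) * Nat.factorial (L+k)
      = Nat.factorial (L+m) := by
    have := Nat.choose_mul_factorial_mul_factorial (show m - k ≤ L + m by omega)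
    rwa [show L + m - (m-k) = L + k by omega] at this
  have h3 : (L+m).choose m * Nat.factorial m * Nat.factorial L = Nat.factorial (L+m) := by
    have := Nat.choose_mul_factorial_mul_factorial (show m ≤ L + m by omega)
    rwa [show L + m - m = L by omega] at this
  have h4 : m.choose k * Nat.factorial k * Nat.factorial (m-k) = Nat.factorial m :=
    Nat.choose_mul_factorial_mul_factorial h
  calc (k+L).choose k * (L+m).choose (m-k) *
        (Nat.factorial k * Nat.factorial L * Nat.factorial (m-k))
      = ((k+L).choose k * Nat.factorial k * Nat.factorial L) *
        ((L+m).choose (m-k) * Nat.factorial (m-k)) := by ring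
    _ = (L+m).choose (m-k) * Nat.factorial (m-k) * Nat.factorial (L+k) := by
        rw [h1, show k+L = L+k by omega]; ring
    _ = Nat.factorial (L+m) := h2
    _ = ((L+m).choose m * Nat.factorial m * Nat.factorial L) := h3.symm
    _ = (L+m).choose m * (m.choose k * Nat.factorial k * Nat.factorial (m-k)) *
        Nat.factorial L := by rw [h4]
    _ = (L+m).choose m * m.choose k *
        (Nat.factorial k * Nat.factorial L * Nat.factorial (m-k)) := by ring

lemma asc_prod (a m : ℕ) :
    ∏ j ∈ range m, ((a:ℝ)+1+j) = (Nat.factorial m : ℝ) * ((a+m).choose m) := by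
  induction m with
  | zero => simp
  | succ m ih =>
    rw [prod_range_succ, ih]
    have key : (a+m+1) * (a+m).choose m = (a+m+1).choose (m+1) * (m+1) :=
      Nat.add_one_mul_choose_eq (a+m) m
    have keyR : ((a:ℝ)+m+1) * ((a+m).choose m) = ((a+m+1).choose (m+1)) * ((m:ℝ)+1) := by
      exact_mod_cast congrArg (fun t : ℕ => (t:ℝ)) key
    rw [show a + (m+1) = a + m + 1 from rfl, Nat.factorial_succ]
    push_cast
    linear_combination (Nat.factorial m : ℝ) * keyR

lemma eval_nat (m s : ℕ) :
    (descPochhammer ℝ m).eval ((s:ℕ) : ℝ) = (Nat.factorial m : ℝ) * (s.choose m) := by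
  rw [descPochhammer_eval_eq_descFactorial, Nat.descFactorial_eq_factorial_mul_choose]
  push_cast; ring

lemma eval_neg (m L s : ℕ) :
    (descPochhammer ℝ m).eval (-((L:ℝ)+1+s)) =
      (-1:ℝ)^m * (Nat.factorial m : ℝ) * ((L+s+m).choose m) := by
  rw [descPoch_eval_prod]
  have : ∀ j ∈ range m, (-((L:ℝ)+1+s) - j) = (-1) * (((L+s:ℕ):ℝ)+1+j) := by
    intro j _; push_cast; ring
  rw [Finset.prod_congr rfl this, Finset.prod_mul_distrib, Finset.prod_const, asc_prod (L+s) m, Finset.card_range]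
  ring

lemma span (n : ℕ) : ∀ P : Polynomial ℝ, P.natDegree ≤ n →
    ∃ c : ℕ → ℝ, ∀ y : ℝ, P.eval y = ∑ m ∈ range (n+1), c m * (descPochhammer ℝ m).eval y := by
  induction n with
  | zero =>
    intro P hP
    refine ⟨fun _ => P.coeff 0, fun y => ?_⟩
    rw [Polynomial.eq_C_of_natDegree_le_zero hP]
    simp
  | succ n ih =>
    intro P hP
    set d := P.coeff (n+1) with hd
    set Q := P - Polynomial.C d * descPochhammer ℝ (n+1) with hQ
    have hdp : (descPochhammer ℝ (n+1)).natDegree = n+1 := descPochhammer_natDegree (R := ℝ) (n+1)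
    have hdegQ : Q.natDegree ≤ n := by
      rw [Polynomial.natDegree_le_iff_coeff_eq_zero]
      intro N hN
      rw [hQ, Polynomial.coeff_sub, Polynomial.coeff_C_mul]
      rcases eq_or_lt_of_le (Nat.succ_le_of_lt hN) with h | h
      · rw [← h, show (descPochhammer ℝ (n+1)).coeff (n+1) = 1 by
          have := (monic_descPochhammer ℝ (n+1)).coeff_natDegree
          rwa [hdp] at this]
        simp [hd]
      · rw [Polynomial.coeff_eq_zero_of_natDegree_lt (lt_of_le_of_lt hP h),
          Polynomial.coeff_eq_zero_of_natDegree_lt (by rw [hdp]; exact h)]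
        simp
    obtain ⟨c, hc⟩ := ih Q hdegQ
    refine ⟨Function.update c (n+1) d, fun y => ?_⟩
    have hPy : P.eval y = Q.eval y + d * (descPochhammer ℝ (n+1)).eval y := by
      rw [hQ]; simp only [Polynomial.eval_sub, Polynomial.eval_mul, Polynomial.eval_C]; ring
    rw [hPy, hc y]
    conv_rhs => rw [Finset.sum_range_succ]
    rw [Function.update_self]
    congr 1
    refine Finset.sum_congr rfl fun m hm => ?_
    rw [Function.update_of_ne (by have := Finset.mem_range.mp hm; omega) d c]

lemma swap3 (n : ℕ) (a : ℕ → ℝ) (b : ℕ → ℕ → ℝ) (c : ℕ → ℝ) (D : ℕ → ℕ → ℝ) :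
    ∑ k ∈ range (n+1), a k * ∑ s ∈ range (k+1), b k s * ∑ m ∈ range (n+1), c m * D m s
      = ∑ m ∈ range (n+1), c m * ∑ k ∈ range (n+1), a k * ∑ s ∈ range (k+1), b k s * D m s := by
  have step1 : ∀ k, a k * ∑ s ∈ range (k+1), b k s * ∑ m ∈ range (n+1), c m * D m s
      = ∑ m ∈ range (n+1), a k * ∑ s ∈ range (k+1), b k s * (c m * D m s) := by
    intro k
    rw [show (∑ s ∈ range (k+1), b k s * ∑ m ∈ range (n+1), c m * D m s)
        = ∑ s ∈ range (k+1), ∑ m ∈ range (n+1), b k s * (c m * D m s) by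
      exact Finset.sum_congr rfl fun s _ => Finset.mul_sum _ _ _]
    rw [Finset.sum_comm, Finset.mul_sum]
  rw [Finset.sum_congr rfl fun k _ => step1 k, Finset.sum_comm]
  refine Finset.sum_congr rfl fun m _ => ?_
  rw [Finset.mul_sum]
  refine Finset.sum_congr rfl fun k _ => ?_
  rw [Finset.mul_sum, Finset.mul_sum, Finset.mul_sum]
  refine Finset.sum_congr rfl fun s _ => ?_
  ring

lemma keyL (L n m : ℕ) (hm : m ≤ n) (x : ℝ) :
    ∑ k ∈ range (n+1), ((k+L).choose k : ℝ) * x^k *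
        ∑ s ∈ range (k+1), (-1:ℝ)^(k-s) * (k.choose s) * (descPochhammer ℝ m).eval ((s:ℕ) : ℝ)
      = (Nat.factorial m : ℝ) * ((L+m).choose m) * x^m := by
  have inner : ∀ k, ∑ s ∈ range (k+1), (-1:ℝ)^(k-s) * (k.choose s) *
        (descPochhammer ℝ m).eval ((s:ℕ) : ℝ)
      = (Nat.factorial m : ℝ) * (-1:ℝ)^k * (if k = m then (-1:ℝ)^m else 0) := by
    intro k
    rw [← lemI k m, Finset.mul_sum]
    refine Finset.sum_congr rfl fun s hs => ?_
    have hsk : s ≤ k := Nat.lt_succ_iff.mp (Finset.mem_range.mp hs)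
    have hpow : (-1:ℝ)^(k-s) = (-1:ℝ)^k * (-1:ℝ)^s := by
      have h1 : (-1:ℝ)^(k-s) * (-1:ℝ)^s = (-1:ℝ)^k := by
        rw [← pow_add, Nat.sub_add_cancel hsk]
      have h2 : (-1:ℝ)^s * (-1:ℝ)^s = 1 := by
        rw [← pow_add, ← two_mul, pow_mul]; norm_num
      calc (-1:ℝ)^(k-s) = (-1:ℝ)^(k-s) * ((-1:ℝ)^s * (-1:ℝ)^s) := by rw [h2, mul_one]
        _ = (-1:ℝ)^k * (-1:ℝ)^s := by rw [← mul_assoc, h1]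
    rw [eval_nat, hpow]
    ring
  rw [Finset.sum_congr rfl fun k _ => by rw [inner k]]
  rw [Finset.sum_eq_single_of_mem m (Finset.mem_range.mpr (by omega))]
  · rw [if_pos rfl, show m + L = L + m by omega]
    have : (-1:ℝ)^m * (-1:ℝ)^m = 1 := by rw [← pow_add, ← two_mul, pow_mul]; norm_num
    calc ((L+m).choose m : ℝ) * x^m * ((Nat.factorial m : ℝ) * (-1:ℝ)^m * (-1:ℝ)^m)
        = ((L+m).choose m : ℝ) * x^m * ((Nat.factorial m : ℝ) * ((-1:ℝ)^m * (-1:ℝ)^m)) := by ring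
      _ = (Nat.factorial m : ℝ) * ((L+m).choose m) * x^m := by rw [this]; ring
  · intro k _ hk
    rw [if_neg hk]
    ring

lemma keyR (L n m : ℕ) (hm : m ≤ n) (x : ℝ) :
    ∑ k ∈ range (n+1), ((k+L).choose k : ℝ) * (x+1)^k *
        ∑ s ∈ range (k+1), (-1:ℝ)^s * (k.choose s) * (descPochhammer ℝ m).eval (-((L:ℝ)+1+s))
      = (Nat.factorial m : ℝ) * ((L+m).choose m) * x^m := by
  have inner : ∀ k, ∑ s ∈ range (k+1), (-1:ℝ)^s * (k.choose s) *
        (descPochhammer ℝ m).eval (-((L:ℝ)+1+s))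
      = (-1:ℝ)^m * (Nat.factorial m : ℝ) *
        (if k ≤ m then (-1:ℝ)^k * ((L+m).choose (m-k)) else 0) := by
    intro k
    rw [← lemII (L+m) k m, Finset.mul_sum]
    refine Finset.sum_congr rfl fun s _ => ?_
    rw [eval_neg, show L + s + m = L + m + s by omega]
    ring
  rw [Finset.sum_congr rfl fun k _ => by rw [inner k]]
  rw [← Finset.sum_subset (Finset.range_subset_range.mpr (show m+1 ≤ n+1 by omega))
    (fun k _ hk => by
      have hnk : ¬ k ≤ m := fun h => hk (Finset.mem_range.mpr (Nat.lt_succ_of_le h))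
      rw [if_neg hnk]
      ring)]
  have hterm : ∀ k ∈ range (m+1),
      ((k+L).choose k : ℝ) * (x+1)^k *
        ((-1:ℝ)^m * (Nat.factorial m : ℝ) *
          (if k ≤ m then (-1:ℝ)^k * ((L+m).choose (m-k)) else 0))
      = (-1:ℝ)^m * (Nat.factorial m : ℝ) * ((L+m).choose m) *
          ((-(x+1))^k * 1^(m-k) * (m.choose k)) := by
    intro k hk
    have hkm : k ≤ m := Nat.lt_succ_iff.mp (Finset.mem_range.mp hk)
    rw [if_pos hkm]
    have hp : ((k+L).choose k : ℝ) * ((L+m).choose (m-k)) = ((L+m).choose m : ℝ) * (m.choose k) := by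
      exact_mod_cast congrArg (fun t : ℕ => (t:ℝ)) (prod_choose L m k hkm)
    have hneg : (-(x+1))^k = (-1:ℝ)^k * (x+1)^k := by rw [neg_pow]
    rw [hneg]
    linear_combination ((-1:ℝ)^m * (Nat.factorial m : ℝ) * (-1:ℝ)^k * (x+1)^k) * hp
  rw [Finset.sum_congr rfl hterm, ← Finset.mul_sum, ← add_pow (-(x+1)) 1 m]
  have h1 : (-(x+1) + 1) = -x := by ring
  rw [h1]
  have h2 : (-1:ℝ)^m * (-x)^m = x^m := by
    rw [← mul_pow, show ((-1:ℝ)*(-x)) = x by ring]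
  calc (-1:ℝ)^m * (Nat.factorial m : ℝ) * ((L+m).choose m) * (-x)^m
      = (Nat.factorial m : ℝ) * ((L+m).choose m) * ((-1:ℝ)^m * (-x)^m) := by ring
    _ = (Nat.factorial m : ℝ) * ((L+m).choose m) * x^m := by rw [h2]

lemma sign_flip (k : ℕ) (E : ℕ → ℝ) :
    (-1:ℝ)^k * ∑ s ∈ range (k+1), (-1:ℝ)^(k-s) * (k.choose s) * E s
      = ∑ s ∈ range (k+1), (-1:ℝ)^s * (k.choose s) * E s := by
  rw [Finset.mul_sum]
  refine Finset.sum_congr rfl fun s hs => ?_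
  have hsk : s ≤ k := Nat.lt_succ_iff.mp (Finset.mem_range.mp hs)
  have h1 : (-1:ℝ)^(k-s) * (-1:ℝ)^s = (-1:ℝ)^k := by rw [← pow_add, Nat.sub_add_cancel hsk]
  have h2 : (-1:ℝ)^(k-s) * (-1:ℝ)^(k-s) = 1 := by rw [← pow_add, ← two_mul, pow_mul]; norm_num
  calc (-1:ℝ)^k * ((-1:ℝ)^(k-s) * (k.choose s) * E s)
      = ((-1:ℝ)^(k-s) * (-1:ℝ)^s) * ((-1:ℝ)^(k-s) * (k.choose s) * E s) := by rw [h1]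
    _ = ((-1:ℝ)^(k-s) * (-1:ℝ)^(k-s)) * ((-1:ℝ)^s * (k.choose s) * E s) := by ring
    _ = (-1:ℝ)^s * (k.choose s) * E s := by rw [h2, one_mul]

theorem stmt8 (α β γ x : ℝ) (hβ : β ≠ 0) (lam : ℕ) (hlam : 1 ≤ lam) (n : ℕ) :
    A lam x n α β γ =
      (-1 : ℝ) ^ n *
        ∑ k ∈ Finset.range (n + 1),
          (Nat.choose (k + lam - 1) k : ℝ) * (-β) ^ k * (Nat.factorial k : ℝ) *
            HS n k α β (β * lam - γ) * (x + 1) ^ k := by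

  obtain ⟨L, rfl⟩ : ∃ L, lam = L + 1 := ⟨lam - 1, by omega⟩
  set P : Polynomial ℝ :=
    ∏ j ∈ range n, (Polynomial.C (-β) * Polynomial.X - Polynomial.C (γ + j*α)) with hPdef
  have hdeg : P.natDegree ≤ n := by
    refine le_trans (Polynomial.natDegree_prod_le _ _) ?_
    calc ∑ j ∈ range n, (Polynomial.C (-β) * Polynomial.X - Polynomial.C (γ + j*α)).natDegree
        ≤ ∑ _j ∈ range n, 1 := by
          refine Finset.sum_le_sum fun j _ => ?_
          refine le_trans (Polynomial.natDegree_sub_le _ _) ?_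
          refine max_le (le_trans (Polynomial.natDegree_C_mul_le _ _)
            (le_of_eq Polynomial.natDegree_X)) ?_
          rw [Polynomial.natDegree_C]; omega
      _ = n := by simp
  obtain ⟨c, hc⟩ := span n P hdeg
  have heval1 : ∀ s : ℕ, gfact (-β * s + -γ) α n = P.eval ((s:ℕ) : ℝ) := by
    intro s
    rw [hPdef, Polynomial.eval_prod, gfact]
    refine Finset.prod_congr rfl fun j _ => ?_
    simp only [Polynomial.eval_sub, Polynomial.eval_mul, Polynomial.eval_C, Polynomial.eval_X]
    ring
  have heval2 : ∀ s : ℕ, gfact (β * s + (β * (((L+1:ℕ)):ℝ) - γ)) α n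
      = P.eval (-((L:ℝ)+1+s)) := by
    intro s
    rw [hPdef, Polynomial.eval_prod, gfact]
    refine Finset.prod_congr rfl fun j _ => ?_
    simp only [Polynomial.eval_sub, Polynomial.eval_mul, Polynomial.eval_C, Polynomial.eval_X]
    push_cast
    ring
  have hfk : ∀ k : ℕ, (Nat.factorial k : ℝ) ≠ 0 :=
    fun k => Nat.cast_ne_zero.mpr (Nat.factorial_ne_zero k)
  have hbk : ∀ k : ℕ, (β:ℝ)^k ≠ 0 := fun k => pow_ne_zero k hβ
  have hnbk : ∀ k : ℕ, (-β:ℝ)^k ≠ 0 := fun k => pow_ne_zero k (neg_ne_zero.mpr hβ)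
  -- left side
  have hLside : A (L+1) x n α β γ
      = (-1:ℝ)^n * ∑ k ∈ range (n+1), ((k+L).choose k : ℝ) * x^k *
          ∑ s ∈ range (k+1), (-1:ℝ)^(k-s) * (k.choose s) * P.eval ((s:ℕ) : ℝ) := by
    rw [A, Finset.mul_sum]
    refine Finset.sum_congr rfl fun k _ => ?_
    rw [show k + (L+1) - 1 = k + L by omega]
    rw [HS]
    rw [Finset.sum_congr rfl fun s _ => by rw [heval1 s]]
    have hconst : (-1:ℝ)^(n+k) * β^k * (Nat.factorial k : ℝ) * (1/((-β)^k * (Nat.factorial k : ℝ)))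
        = (-1:ℝ)^n := by
      rw [show ((-β):ℝ)^k = (-1)^k * β^k from by rw [neg_pow]]
      field_simp
      rw [pow_add]
      ring
    linear_combination (((k+L).choose k : ℝ) * x^k *
      ∑ s ∈ range (k+1), (-1:ℝ)^(k-s) * (k.choose s) * P.eval ((s:ℕ) : ℝ)) * hconst
  -- right side
  have hRside : ∑ k ∈ Finset.range (n + 1),
        ((k + (L+1) - 1).choose k : ℝ) * (-β) ^ k * (Nat.factorial k : ℝ) *
          HS n k α β (β * ((L+1:ℕ):ℝ) - γ) * (x + 1) ^ k
      = ∑ k ∈ range (n+1), ((k+L).choose k : ℝ) * (x+1)^k *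
          ∑ s ∈ range (k+1), (-1:ℝ)^s * (k.choose s) * P.eval (-((L:ℝ)+1+s)) := by
    refine Finset.sum_congr rfl fun k _ => ?_
    rw [show k + (L+1) - 1 = k + L by omega]
    rw [HS]
    rw [Finset.sum_congr rfl fun s _ => by rw [heval2 s]]
    rw [← sign_flip k (fun s => P.eval (-((L:ℝ)+1+s)))]
    have hconst : ((-β):ℝ)^k * (Nat.factorial k : ℝ) * (1/(β^k * (Nat.factorial k : ℝ)))
        = (-1:ℝ)^k := by
      rw [show ((-β):ℝ)^k = (-1)^k * β^k from by rw [neg_pow]]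
      field_simp
    linear_combination ((((k+L).choose k : ℝ)) * (x+1)^k *
      ∑ s ∈ range (k+1), (-1:ℝ)^(k-s) * (k.choose s) * P.eval (-((L:ℝ)+1+s))) * hconst
  rw [hLside, hRside]
  congr 1
  calc ∑ k ∈ range (n+1), ((k+L).choose k : ℝ) * x^k *
        ∑ s ∈ range (k+1), (-1:ℝ)^(k-s) * (k.choose s) * P.eval ((s:ℕ) : ℝ)
      = ∑ k ∈ range (n+1), (((k+L).choose k : ℝ) * x^k) *
        ∑ s ∈ range (k+1), ((-1:ℝ)^(k-s) * (k.choose s)) *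
          ∑ m ∈ range (n+1), c m * (descPochhammer ℝ m).eval ((s:ℕ) : ℝ) := by
        refine Finset.sum_congr rfl fun k _ => ?_
        congr 1
        refine Finset.sum_congr rfl fun s _ => by rw [hc]
    _ = ∑ m ∈ range (n+1), c m * ∑ k ∈ range (n+1), (((k+L).choose k : ℝ) * x^k) *
        ∑ s ∈ range (k+1), ((-1:ℝ)^(k-s) * (k.choose s)) *
          (descPochhammer ℝ m).eval ((s:ℕ) : ℝ) :=
        swap3 n _ _ c _
    _ = ∑ m ∈ range (n+1), c m * ((Nat.factorial m : ℝ) * ((L+m).choose m) * x^m) :=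
        Finset.sum_congr rfl fun m hm => by
          rw [← keyL L n m (Nat.lt_succ_iff.mp (Finset.mem_range.mp hm)) x]
    _ = ∑ m ∈ range (n+1), c m * ∑ k ∈ range (n+1), (((k+L).choose k : ℝ) * (x+1)^k) *
        ∑ s ∈ range (k+1), ((-1:ℝ)^s * (k.choose s)) *
          (descPochhammer ℝ m).eval (-((L:ℝ)+1+s)) :=
        Finset.sum_congr rfl fun m hm => by
          rw [keyR L n m (Nat.lt_succ_iff.mp (Finset.mem_range.mp hm)) x]
    _ = ∑ k ∈ range (n+1), (((k+L).choose k : ℝ) * (x+1)^k) *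
        ∑ s ∈ range (k+1), ((-1:ℝ)^s * (k.choose s)) *
          ∑ m ∈ range (n+1), c m * (descPochhammer ℝ m).eval (-((L:ℝ)+1+s)) :=
        (swap3 n _ _ c _).symm
    _ = ∑ k ∈ range (n+1), ((k+L).choose k : ℝ) * (x+1)^k *
        ∑ s ∈ range (k+1), (-1:ℝ)^s * (k.choose s) * P.eval (-((L:ℝ)+1+s)) := by
        refine Finset.sum_congr rfl fun k _ => ?_
        congr 1
        refine Finset.sum_congr rfl fun s _ => by rw [hc]
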